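/- In Morris-style approximate counting with base α > 1 where the counter z is incremented upon each event with probability 1/(1 + α^z), starting from z = c with α^c = 1/δ + 1: after n ≥ s events (where s = 1/(δ(α−1))), the expectation satisfies n(α−1)(1−δ) + 1 ≤ E[α^{z_n}] ≤ n(α−1) + 1. More precisely, E[α^{z_n}] = E[α^{z_{n−1}}] + (α−1)·E[α^{z_{n−1}}/(1+α^{z_{n−1}})]. -/

import Mathlib

/-- Morris-style approximate counting with base `α`: increment probability
`1/(1+α^z)`, started at `z_s = c` with `α^c = 1/δ + 1` and `s = 1/(δ(α-1))`. The distribution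
of `z_n` is `q n`. Then `E[α^{z_{n+1}}] = E[α^{z_n}] + (α-1)·E[α^{z_n}/(1+α^{z_n})]`, and
`n(α-1)(1-δ) + 1 ≤ E[α^{z_n}] ≤ n(α-1) + 1` for all `n ≥ s`. -/
theorem morris_counter_expectation
    (α δ : ℝ) (s c : ℕ) (q : ℕ → ℕ → ℝ)
    (hα : 1 < α) (hδ0 : 0 < δ) (hδ1 : δ < 1)
    (hs : (s : ℝ) = 1 / (δ * (α - 1)))
    (hcval : α ^ c = 1 / δ + 1)
    (hinit : ∀ j, q s j = if j = c then 1 else 0)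
    (hrec : ∀ n, s ≤ n → ∀ k,
      q (n + 1) k = (if k = 0 then 0 else q n (k - 1) * (1 / (α ^ (k - 1) + 1)))
        + q n k * (1 - 1 / (α ^ k + 1)))
    (hnn : ∀ n j, 0 ≤ q n j)
    (hlow : ∀ n j, j < c → q n j = 0)
    (hhigh : ∀ n j, s ≤ n → c + (n - s) < j → q n j = 0)
    (htot : ∀ n, s ≤ n → ∑ j ∈ Finset.range (c + n + 1), q n j = 1) :
    ∀ n, s ≤ n →
      ((∑ j ∈ Finset.range (c + (n + 1) + 1), q (n + 1) j * α ^ j)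
          = (∑ j ∈ Finset.range (c + n + 1), q n j * α ^ j)
            + (α - 1) * ∑ j ∈ Finset.range (c + n + 1), q n j * (α ^ j / (1 + α ^ j)))
      ∧ (n : ℝ) * (α - 1) * (1 - δ) + 1 ≤ ∑ j ∈ Finset.range (c + n + 1), q n j * α ^ j
      ∧ (∑ j ∈ Finset.range (c + n + 1), q n j * α ^ j) ≤ (n : ℝ) * (α - 1) + 1 := by
  have hα0 : (0:ℝ) < α := lt_trans one_pos hα
  have hα1 : (0:ℝ) < α - 1 := sub_pos.mpr hα
  have hpow : ∀ j : ℕ, (0:ℝ) < α ^ j := fun j => pow_pos hα0 j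
  have hden : ∀ j : ℕ, (0:ℝ) < α ^ j + 1 := fun j => by linarith [hpow j]
  -- Part 1: the recurrence for the expectation
  have part1 : ∀ n, s ≤ n →
      (∑ j ∈ Finset.range (c + (n + 1) + 1), q (n + 1) j * α ^ j)
        = (∑ j ∈ Finset.range (c + n + 1), q n j * α ^ j)
          + (α - 1) * ∑ j ∈ Finset.range (c + n + 1), q n j * (α ^ j / (1 + α ^ j)) := by
    intro n hn
    have hz : q n (c + n + 1) = 0 := hhigh n _ hn (by omega)
    have hsum : ∀ k ∈ Finset.range (c + (n+1) + 1),
        q (n + 1) k * α ^ k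
          = (if k = 0 then 0 else q n (k - 1) * (1 / (α ^ (k - 1) + 1))) * α ^ k
            + q n k * (1 - 1 / (α ^ k + 1)) * α ^ k := by
      intro k _
      rw [hrec n hn k, add_mul]
    rw [Finset.sum_congr rfl hsum, Finset.sum_add_distrib]
    have e1 : (∑ k ∈ Finset.range (c + (n+1) + 1),
        (if k = 0 then 0 else q n (k - 1) * (1 / (α ^ (k - 1) + 1))) * α ^ k)
        = ∑ j ∈ Finset.range (c + n + 1), q n j * (1 / (α ^ j + 1)) * α ^ (j + 1) := by
      have : c + (n+1) + 1 = (c + n + 1) + 1 := by omega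
      rw [this, Finset.sum_range_succ']
      simp
    have e2 : (∑ k ∈ Finset.range (c + (n+1) + 1), q n k * (1 - 1 / (α ^ k + 1)) * α ^ k)
        = ∑ j ∈ Finset.range (c + n + 1), q n j * (1 - 1 / (α ^ j + 1)) * α ^ j := by
      have : c + (n+1) + 1 = (c + n + 1) + 1 := by omega
      rw [this, Finset.sum_range_succ, hz]
      ring
    rw [e1, e2, Finset.mul_sum, ← Finset.sum_add_distrib, ← Finset.sum_add_distrib]
    apply Finset.sum_congr rfl
    intro j _
    have h1 : α ^ j + 1 ≠ 0 := ne_of_gt (hden j)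
    have h2 : (1:ℝ) + α ^ j ≠ 0 := by rw [add_comm]; exact h1
    field_simp
    ring
  -- bounds on the auxiliary sum
  have hTub : ∀ n, s ≤ n →
      (∑ j ∈ Finset.range (c + n + 1), q n j * (α ^ j / (1 + α ^ j))) ≤ 1 := by
    intro n hn
    calc (∑ j ∈ Finset.range (c + n + 1), q n j * (α ^ j / (1 + α ^ j)))
        ≤ ∑ j ∈ Finset.range (c + n + 1), q n j := by
          apply Finset.sum_le_sum
          intro j _
          have : α ^ j / (1 + α ^ j) ≤ 1 := by
            rw [div_le_one (by linarith [hpow j])]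
            linarith [hpow j]
          calc q n j * (α ^ j / (1 + α ^ j)) ≤ q n j * 1 :=
                mul_le_mul_of_nonneg_left this (hnn n j)
            _ = q n j := mul_one _
      _ = 1 := htot n hn
  have hTlb : ∀ n, s ≤ n →
      (1 - δ) ≤ ∑ j ∈ Finset.range (c + n + 1), q n j * (α ^ j / (1 + α ^ j)) := by
    intro n hn
    have : ((1:ℝ) - δ) * 1 = (1 - δ) * ∑ j ∈ Finset.range (c + n + 1), q n j := by
      rw [htot n hn]
    calc (1:ℝ) - δ = (1 - δ) * ∑ j ∈ Finset.range (c + n + 1), q n j := by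
          rw [htot n hn, mul_one]
      _ = ∑ j ∈ Finset.range (c + n + 1), (1 - δ) * q n j := Finset.mul_sum _ _ _
      _ ≤ ∑ j ∈ Finset.range (c + n + 1), q n j * (α ^ j / (1 + α ^ j)) := by
          apply Finset.sum_le_sum
          intro j _
          by_cases hjc : j < c
          · rw [hlow n j hjc]; simp
          · push_neg at hjc
            have hx : (1:ℝ) / δ + 1 ≤ α ^ j := by
              rw [← hcval]
              exact pow_le_pow_right₀ (le_of_lt hα) hjc
            have hfrac : (1 - δ) ≤ α ^ j / (1 + α ^ j) := by
              rw [le_div_iff₀ (by linarith [hpow j])]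
              have h3 : δ * (1/δ + 1) ≤ δ * α ^ j :=
                mul_le_mul_of_nonneg_left hx hδ0.le
              have h4 : δ * (1/δ + 1) = 1 + δ := by field_simp
              nlinarith
            calc (1 - δ) * q n j = q n j * (1 - δ) := mul_comm _ _
              _ ≤ q n j * (α ^ j / (1 + α ^ j)) :=
                mul_le_mul_of_nonneg_left hfrac (hnn n j)
  -- base case
  have hbase : (∑ j ∈ Finset.range (c + s + 1), q s j * α ^ j) = 1 / δ + 1 := by
    have : ∀ j ∈ Finset.range (c + s + 1), q s j * α ^ j
        = if j = c then α ^ c else 0 := by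
      intro j _
      rw [hinit j]
      by_cases h : j = c <;> simp [h]
    rw [Finset.sum_congr rfl this, Finset.sum_ite_eq' (Finset.range (c + s + 1)) c
      (fun _ => α ^ c)]
    simp [Finset.mem_range, hcval]
  have hsval : (s:ℝ) * (α - 1) = 1 / δ := by
    rw [hs]
    field_simp
  -- bounds by induction
  have bounds : ∀ n, s ≤ n →
      ((n : ℝ) * (α - 1) * (1 - δ) + 1 ≤ ∑ j ∈ Finset.range (c + n + 1), q n j * α ^ j
      ∧ (∑ j ∈ Finset.range (c + n + 1), q n j * α ^ j) ≤ (n : ℝ) * (α - 1) + 1) := by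
    intro n hn
    induction n, hn using Nat.le_induction with
    | base =>
      rw [hbase]
      constructor
      · rw [hsval]
        have : (1/δ) * (1 - δ) = 1/δ - 1 := by field_simp
        nlinarith [hsval]
      · rw [hsval]
    | succ n hn ih =>
      obtain ⟨ih1, ih2⟩ := ih
      have h1 := part1 n hn
      have hT1 := hTub n hn
      have hT2 := hTlb n hn
      rw [h1]
      push_cast
      constructor
      · nlinarith
      · nlinarith
  intro n hn
  exact ⟨part1 n hn, (bounds n hn).1, (bounds n hn).2⟩
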